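/- Let σ be a permutation of the finite set S(j_1,...,j_k) = {(a,b) : 1 ≤ a ≤ k, 1 ≤ b ≤ j_a}, where j_1+...+j_k = r. If σ is not a single cycle, then there exists a cyclic permutation σ̂ of S(j_1,...,j_k) with Dec(σ) ≤ Dec(σ̂), where Dec counts pairs (a,b) such that the first coordinate of σ(a,b) is strictly smaller than a. -/

import Mathlib

open Equiv Equiv.Perm Finset

section Merge

variable {α : Type*} [Fintype α] [DecidableEq α]

/-- Stepping lemma: as long as iterates of `y` under `f` do not return to `y`,
the iterates of `x` under `f * swap x y` follow those of `y` under `f`. -/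
lemma mul_swap_pow_apply (f : Perm α) (x y : α) (h : ¬ f.SameCycle x y) :
    ∀ k : ℕ, (∀ i : ℕ, 0 < i → i ≤ k → (f ^ i) y ≠ y) →
      ((f * Equiv.swap x y) ^ (k + 1)) x = (f ^ (k + 1)) y := by
  intro k
  induction k with
  | zero =>
    intro _
    simp [mul_apply, Equiv.swap_apply_left]
  | succ k ih =>
    intro hk
    have h1 : ((f * Equiv.swap x y) ^ (k + 1)) x = (f ^ (k + 1)) y :=
      ih (fun i hi hik => hk i hi (hik.trans (Nat.le_succ k)))
    have hz1 : (f ^ (k + 1)) y ≠ x := by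
      intro hc
      have hyx : f.SameCycle y x := ⟨((k + 1 : ℕ) : ℤ), by rw [zpow_natCast]; exact hc⟩
      exact h hyx.symm
    have hz2 : (f ^ (k + 1)) y ≠ y := hk (k + 1) (Nat.succ_pos k) (le_refl (k + 1))
    calc ((f * Equiv.swap x y) ^ (k + 1 + 1)) x
        = (f * Equiv.swap x y) (((f * Equiv.swap x y) ^ (k + 1)) x) := by
          rw [pow_succ' (f * Equiv.swap x y) (k + 1)]; rfl
      _ = f (Equiv.swap x y ((f ^ (k + 1)) y)) := by rw [h1]; rfl
      _ = f ((f ^ (k + 1)) y) := by rw [Equiv.swap_apply_of_ne_of_ne hz1 hz2]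
      _ = (f ^ (k + 1 + 1)) y := by rw [pow_succ' f (k + 1)]; rfl

/-- If `x` and `y` are in different cycles of `f`, then in `f * swap x y` the point `x`
is in the same cycle as every point of the `f`-cycle of `y`. -/
lemma mul_swap_sameCycle_right (f : Perm α) (x y : α) (h : ¬ f.SameCycle x y)
    {a : α} (ha : f.SameCycle y a) : (f * Equiv.swap x y).SameCycle x a := by
  obtain ⟨n, -, hn⟩ := Equiv.Perm.SameCycle.exists_pow_eq' ha
  -- least period of y
  have hex : ∃ d : ℕ, 0 < d ∧ (f ^ d) y = y := by
    refine ⟨orderOf f, orderOf_pos f, by simp [pow_orderOf_eq_one]⟩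
  classical
  set d := Nat.find hex with hd
  obtain ⟨hdpos, hdy⟩ : 0 < d ∧ (f ^ d) y = y := Nat.find_spec hex
  have hmin : ∀ i : ℕ, 0 < i → i < d → (f ^ i) y ≠ y := by
    intro i hi hid hc
    exact Nat.find_min hex hid ⟨hi, hc⟩
  -- reduce n mod d
  have hmod : (f ^ (n % d)) y = a := by
    have h1 : (f ^ (d * (n / d))) y = y := by
      rw [pow_mul]
      induction (n / d) with
      | zero => simp
      | succ q ihq =>
        rw [pow_succ, mul_apply]
        rw [hdy]; exact ihq
    calc (f ^ (n % d)) y = (f ^ (n % d)) ((f ^ (d * (n / d))) y) := by rw [h1]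
      _ = (f ^ (n % d + d * (n / d))) y := by rw [pow_add, mul_apply]
      _ = (f ^ n) y := by rw [Nat.mod_add_div]
      _ = a := hn
  have hxy : (f * Equiv.swap x y).SameCycle x y := by
    refine ⟨(d : ℤ), ?_⟩
    have := mul_swap_pow_apply f x y h (d - 1)
      (fun i hi hik => hmin i hi (by omega))
    rw [Nat.sub_add_cancel hdpos] at this
    rw [zpow_natCast, this, hdy]
  rcases Nat.eq_zero_or_pos (n % d) with hm | hm
  · rw [hm] at hmod; simp at hmod; rw [← hmod]; exact hxy
  · have hlt : n % d < d := Nat.mod_lt n hdpos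
    have := mul_swap_pow_apply f x y h (n % d - 1)
      (fun i hi hik => hmin i hi (by omega))
    rw [Nat.sub_add_cancel hm] at this
    exact ⟨((n % d : ℕ) : ℤ), by rw [zpow_natCast, this, hmod]⟩

/-- If `x` and `y` are in different cycles of `f`, then in `f * swap x y` the point `x`
is in the same cycle as every point of the `f`-cycle of `x` or of `y`. -/
lemma mul_swap_sameCycle (f : Perm α) (x y : α) (h : ¬ f.SameCycle x y)
    {a : α} (ha : f.SameCycle x a ∨ f.SameCycle y a) :
    (f * Equiv.swap x y).SameCycle x a := by
  have hxy : (f * Equiv.swap x y).SameCycle x y :=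
    mul_swap_sameCycle_right f x y h (Equiv.Perm.SameCycle.refl f y)
  rcases ha with ha | ha
  · have h' : ¬ f.SameCycle y x := fun hh => h hh.symm
    have := mul_swap_sameCycle_right f y x h' ha
    rw [Equiv.swap_comm y x] at this
    exact hxy.trans this
  · exact mul_swap_sameCycle_right f x y h ha

end Merge

/-- The number of decreases of a permutation `σ` of `S(j_1,...,j_k)`, modelled as the
sigma type `(a : Fin k) × Fin (j a)`. -/
def Dec {k : ℕ} {j : Fin k → ℕ} (σ : Equiv.Perm ((a : Fin k) × Fin (j a))) : ℕ :=
  (Finset.univ.filter (fun x : (a : Fin k) × Fin (j a) => (σ x).1 < x.1)).card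

/-- Merging two cycles at per-cycle minimal elements does not decrease `Dec`. -/
lemma dec_le_mul_swap {k : ℕ} {j : Fin k → ℕ} (σ : Equiv.Perm ((a : Fin k) × Fin (j a)))
    (x y : (a : Fin k) × Fin (j a)) (hx : ¬ (σ x).1 < x.1) (hy : ¬ (σ y).1 < y.1) :
    Dec σ ≤ Dec (σ * Equiv.swap x y) := by
  apply Finset.card_le_card
  intro z hz
  rw [Finset.mem_filter] at hz ⊢
  refine ⟨Finset.mem_univ z, ?_⟩
  have hzx : z ≠ x := by rintro rfl; exact hx hz.2
  have hzy : z ≠ y := by rintro rfl; exact hy hz.2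
  have : (σ * Equiv.swap x y) z = σ z := by
    simp [Equiv.Perm.mul_apply, Equiv.swap_apply_of_ne_of_ne hzx hzy]
  rw [this]; exact hz.2

lemma key_induction {k : ℕ} {j : Fin k → ℕ} (x0 : (a : Fin k) × Fin (j a)) :
    ∀ n : ℕ, ∀ σ : Equiv.Perm ((a : Fin k) × Fin (j a)),
      (Finset.univ.filter (fun p => ¬ σ.SameCycle x0 p)).card ≤ n →
      ∃ σ' : Equiv.Perm ((a : Fin k) × Fin (j a)),
        σ'.IsCycleOn (Set.univ : Set ((a : Fin k) × Fin (j a))) ∧ Dec σ ≤ Dec σ' := by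
  intro n
  induction n with
  | zero =>
    intro σ hcard
    refine ⟨σ, ⟨Set.bijOn_univ.2 σ.bijective, ?_⟩, le_refl _⟩
    intro p _ q _
    have hall : ∀ p, σ.SameCycle x0 p := by
      intro p
      by_contra hp
      have : p ∈ Finset.univ.filter (fun p => ¬ σ.SameCycle x0 p) := by
        simp [hp]
      have := Finset.card_pos.2 ⟨p, this⟩
      omega
    exact (hall p).symm.trans (hall q)
  | succ n ih =>
    intro σ hcard
    by_cases hle : (Finset.univ.filter (fun p => ¬ σ.SameCycle x0 p)).card ≤ n
    · exact ih σ hle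
    · -- there is a point not in the cycle of x0
      have hpos : 0 < (Finset.univ.filter (fun p => ¬ σ.SameCycle x0 p)).card := by omega
      obtain ⟨y, hy⟩ := Finset.card_pos.1 hpos
      rw [Finset.mem_filter] at hy
      have hy2 : ¬ σ.SameCycle x0 y := hy.2
      -- minimal element of the cycle of x0
      obtain ⟨x, hxmem, hxmin⟩ := Finset.exists_min_image
        (Finset.univ.filter (fun p => σ.SameCycle x0 p)) (fun p => p.1)
        ⟨x0, by simp [Equiv.Perm.SameCycle.refl]⟩
      rw [Finset.mem_filter] at hxmem
      have hx0x : σ.SameCycle x0 x := hxmem.2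
      -- minimal element of the cycle of y
      obtain ⟨y', hymem, hymin⟩ := Finset.exists_min_image
        (Finset.univ.filter (fun p => σ.SameCycle y p)) (fun p => p.1)
        ⟨y, by simp [Equiv.Perm.SameCycle.refl]⟩
      rw [Finset.mem_filter] at hymem
      have hyy' : σ.SameCycle y y' := hymem.2
      have hnsc : ¬ σ.SameCycle x y' := by
        intro hc
        exact hy2 (hx0x.trans (hc.trans hyy'.symm))
      set τ := σ * Equiv.swap x y' with hτ
      -- Dec does not decrease
      have hxnd : ¬ (σ x).1 < x.1 := by
        have : σ x ∈ Finset.univ.filter (fun p => σ.SameCycle x0 p) := by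
          simp only [Finset.mem_filter, Finset.mem_univ, true_and]
          exact hx0x.trans ⟨1, by simp⟩
        exact not_lt.2 (hxmin _ this)
      have hynd : ¬ (σ y').1 < y'.1 := by
        have : σ y' ∈ Finset.univ.filter (fun p => σ.SameCycle y p) := by
          simp only [Finset.mem_filter, Finset.mem_univ, true_and]
          exact hyy'.trans ⟨1, by simp⟩
        exact not_lt.2 (hymin _ this)
      have hdec : Dec σ ≤ Dec τ := dec_le_mul_swap σ x y' hxnd hynd
      -- cycles merge: everything previously in cycle of x0, plus y, is now in cycle of x0
      have hkeep : ∀ p, σ.SameCycle x0 p → τ.SameCycle x0 p := by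
        intro p hp
        have h1 : τ.SameCycle x x0 := mul_swap_sameCycle σ x y' hnsc (Or.inl hx0x.symm)
        have h2 : τ.SameCycle x p := mul_swap_sameCycle σ x y' hnsc (Or.inl (hx0x.symm.trans hp))
        exact h1.symm.trans h2
      have hnew : τ.SameCycle x0 y := by
        have h1 : τ.SameCycle x x0 := mul_swap_sameCycle σ x y' hnsc (Or.inl hx0x.symm)
        have h2 : τ.SameCycle x y := mul_swap_sameCycle σ x y' hnsc (Or.inr hyy'.symm)
        exact h1.symm.trans h2
      -- cardinality strictly drops
      have hsub : (Finset.univ.filter (fun p => ¬ τ.SameCycle x0 p)) ⊂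
          (Finset.univ.filter (fun p => ¬ σ.SameCycle x0 p)) := by
        constructor
        · intro p hp
          rw [Finset.mem_filter] at hp ⊢
          exact ⟨hp.1, fun hc => hp.2 (hkeep p hc)⟩
        · intro hcontra
          have := hcontra (Finset.mem_filter.2 ⟨Finset.mem_univ y, hy2⟩)
          rw [Finset.mem_filter] at this
          exact this.2 hnew
      have hlt : (Finset.univ.filter (fun p => ¬ τ.SameCycle x0 p)).card ≤ n := by
        have := Finset.card_lt_card hsub
        omega
      obtain ⟨σ', hσ', hdec'⟩ := ih τ hlt
      exact ⟨σ', hσ', hdec.trans hdec'⟩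

/-- If `σ` is a permutation of `S(j_1,...,j_k)` which is not a single cycle, then there is
a cyclic permutation `σ̂` (a single cycle on all of `S(j_1,...,j_k)`) with
`Dec σ ≤ Dec σ'`. -/
theorem exists_cycle_dec_ge (k r : ℕ) (j : Fin k → ℕ) (hr : ∑ a, j a = r)
    (σ : Equiv.Perm ((a : Fin k) × Fin (j a)))
    (hσ : ¬ σ.IsCycleOn (Set.univ : Set ((a : Fin k) × Fin (j a)))) :
    ∃ σ' : Equiv.Perm ((a : Fin k) × Fin (j a)),
      σ'.IsCycleOn (Set.univ : Set ((a : Fin k) × Fin (j a))) ∧ Dec σ ≤ Dec σ' := by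
  have hne : Nonempty ((a : Fin k) × Fin (j a)) := by
    by_contra hem
    rw [not_nonempty_iff] at hem
    exact hσ (Equiv.Perm.isCycleOn_of_subsingleton σ _)
  obtain ⟨x0⟩ := hne
  exact key_induction x0 (Finset.univ.filter (fun p => ¬ σ.SameCycle x0 p)).card σ le_rfl
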